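/- Let k ≥ 1 be an integer and let Y be a random variable with the chi-squared distribution χ²_k. Then for every t with 0 < t < 1 one has P(|Y/k − 1| ≥ t) ≤ 2·exp(−k t²/8), and for every t ≥ 1 one has P(|Y/k − 1| ≥ t) ≤ 2·exp(−k t/8). -/

import Mathlib

open MeasureTheory ProbabilityTheory Matrix Filter
open scoped ProbabilityTheory ENNReal

noncomputable def chiSqMeasure (k : ℕ) : MeasureTheory.Measure ℝ :=
  MeasureTheory.volume.withDensity fun x =>
    ENNReal.ofReal (if 0 < x then
      ((2 : ℝ) ^ ((k : ℝ) / 2) * Real.Gamma ((k : ℝ) / 2))⁻¹ *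
        x ^ ((k : ℝ) / 2 - 1) * Real.exp (-x / 2)
    else 0)

lemma chiSq_density_measurable (k : ℕ) : Measurable fun x : ℝ =>
    ENNReal.ofReal (if 0 < x then
      ((2 : ℝ) ^ ((k : ℝ) / 2) * Real.Gamma ((k : ℝ) / 2))⁻¹ *
        x ^ ((k : ℝ) / 2 - 1) * Real.exp (-x / 2)
    else 0) := by
  apply Measurable.ennreal_ofReal
  apply Measurable.ite measurableSet_Ioi
  · fun_prop
  · exact measurable_const

lemma chiSq_lintegral_exp (k : ℕ) (hk : 1 ≤ k) {l : ℝ} (hl : l < 1/2) :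
    ∫⁻ x, ENNReal.ofReal (Real.exp (l * x)) ∂(chiSqMeasure k)
      = ENNReal.ofReal ((1 - 2*l) ^ (-((k:ℝ)/2))) := by
  have ha : (0:ℝ) < (k:ℝ)/2 := by
    have : (1:ℝ) ≤ (k:ℝ) := by exact_mod_cast hk
    linarith
  rw [chiSqMeasure, lintegral_withDensity_eq_lintegral_mul _ (chiSq_density_measurable k)
    (by fun_prop)]
  simp only [Pi.mul_apply]
  set a : ℝ := (k:ℝ)/2 with ha_def
  set r : ℝ := 1/2 - l with hr_def
  have hr : 0 < r := by rw [hr_def]; linarith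
  have heq : (fun x : ℝ => (ENNReal.ofReal (if 0 < x then
      ((2 : ℝ) ^ a * Real.Gamma a)⁻¹ * x ^ (a - 1) * Real.exp (-x / 2) else 0))
        * ENNReal.ofReal (Real.exp (l * x)))
      =ᵐ[volume] fun x => ENNReal.ofReal ((1 - 2*l) ^ (-a)) * gammaPDF a r x := by
    filter_upwards [compl_mem_ae_iff.2 (Real.volume_singleton (a := 0))] with x hx
    simp only [Set.mem_compl_iff, Set.mem_singleton_iff] at hx
    rcases lt_trichotomy x 0 with h | h | h
    · rw [if_neg (by linarith), gammaPDF_of_neg h]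
      simp
    · exact absurd h hx
    · rw [if_pos h, gammaPDF_of_nonneg h.le,
        ← ENNReal.ofReal_mul (by have := Real.Gamma_pos_of_pos ha; positivity),
        ← ENNReal.ofReal_mul (Real.rpow_nonneg (by linarith) _)]
      congr 1
      have h2r : 1 - 2*l = 2*r := by rw [hr_def]; ring
      have hcoef : ((2:ℝ) ^ a * Real.Gamma a)⁻¹ = (1 - 2*l) ^ (-a) * (r ^ a / Real.Gamma a) := by
        have hga : Real.Gamma a ≠ 0 := (Real.Gamma_pos_of_pos ha).ne'
        have hra : (0:ℝ) < r ^ a := Real.rpow_pos_of_pos hr a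
        have h2a : (0:ℝ) < (2:ℝ) ^ a := Real.rpow_pos_of_pos two_pos a
        rw [h2r, Real.rpow_neg (by linarith : (0:ℝ) ≤ 2*r),
          Real.mul_rpow (by norm_num) hr.le]
        field_simp
      have hexp : Real.exp (-x/2) * Real.exp (l*x) = Real.exp (-(r*x)) := by
        rw [← Real.exp_add]; congr 1; rw [hr_def]; ring
      calc ((2:ℝ) ^ a * Real.Gamma a)⁻¹ * x ^ (a - 1) * Real.exp (-x / 2) * Real.exp (l * x)
          = ((2:ℝ) ^ a * Real.Gamma a)⁻¹ * x ^ (a - 1) * (Real.exp (-x/2) * Real.exp (l*x)) := by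
            ring
        _ = (1 - 2*l) ^ (-a) * (r ^ a / Real.Gamma a * x ^ (a - 1) * Real.exp (-(r*x))) := by
            rw [hexp, hcoef]; ring
  rw [lintegral_congr_ae heq, lintegral_const_mul' _ _ ENNReal.ofReal_ne_top,
    lintegral_gammaPDF_eq_one ha hr, mul_one]

lemma log_ineq_A {t : ℝ} (h0 : 0 ≤ t) (h1 : t ≤ 1) : Real.log (1+t) ≤ t - t^2/4 := by
  set f : ℝ → ℝ := fun x => Real.log (1+x) - x + x^2/4 with hf
  have hder : ∀ x ∈ Set.Ioo (0:ℝ) t, HasDerivAt f (1/(1+x) - 1 + x/2) x := by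
    intro x hx
    have h1x : (1:ℝ) + x ≠ 0 := by nlinarith [hx.1]
    have hbase : HasDerivAt (fun y : ℝ => 1 + y) 1 x := by
      simpa using (hasDerivAt_id x).const_add 1
    have hlog : HasDerivAt (fun y : ℝ => Real.log (1+y)) (1/(1+x)) x := by
      simpa using hbase.log h1x
    have hsq : HasDerivAt (fun y : ℝ => y^2/4) (x/2) x := by
      have := (hasDerivAt_pow 2 x).div_const 4
      exact this.congr_deriv (by push_cast; ring)
    exact (hlog.sub (hasDerivAt_id x)).add hsq
  have hanti : AntitoneOn f (Set.Icc 0 t) := by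
    apply antitoneOn_of_deriv_nonpos (convex_Icc 0 t)
    · apply ContinuousOn.add
      · apply ContinuousOn.sub
        · apply ContinuousOn.log (by fun_prop)
          intro x hx
          have := hx.1
          simp only [Set.mem_Icc] at hx
          nlinarith [hx.1]
        · fun_prop
      · fun_prop
    · intro x hx
      rw [interior_Icc] at hx
      exact (hder x hx).differentiableAt.differentiableWithinAt
    · intro x hx
      rw [interior_Icc] at hx
      rw [(hder x hx).deriv]
      have hx1 : (0:ℝ) < 1 + x := by nlinarith [hx.1]
      have : 1/(1+x) ≤ 1 - x/2 := by
        rw [div_le_iff₀ hx1]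
        nlinarith [hx.1, hx.2]
      linarith
  have h := hanti (Set.left_mem_Icc.2 h0) (Set.mem_Icc.2 ⟨h0, le_refl t⟩) h0
  simp only [hf] at h
  norm_num at h
  nlinarith [h]

lemma log_ineq_B {t : ℝ} (h1 : 1 ≤ t) : Real.log (1+t) ≤ 3*t/4 := by
  set f : ℝ → ℝ := fun x => Real.log (1+x) - 3*x/4 with hf
  have hder : ∀ x ∈ Set.Ioo (1:ℝ) t, HasDerivAt f (1/(1+x) - 3/4) x := by
    intro x hx
    have h1x : (1:ℝ) + x ≠ 0 := by nlinarith [hx.1]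
    have hbase : HasDerivAt (fun y : ℝ => 1 + y) 1 x := by
      simpa using (hasDerivAt_id x).const_add 1
    have hlog : HasDerivAt (fun y : ℝ => Real.log (1+y)) (1/(1+x)) x := by
      simpa using hbase.log h1x
    have hlin : HasDerivAt (fun y : ℝ => 3*y/4) (3/4) x := by
      have := ((hasDerivAt_id x).const_mul 3).div_const 4
      exact this.congr_deriv (by norm_num)
    exact hlog.sub hlin
  have hanti : AntitoneOn f (Set.Icc 1 t) := by
    apply antitoneOn_of_deriv_nonpos (convex_Icc 1 t)
    · apply ContinuousOn.sub
      · apply ContinuousOn.log (by fun_prop)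
        intro x hx
        simp only [Set.mem_Icc] at hx
        nlinarith [hx.1]
      · fun_prop
    · intro x hx
      rw [interior_Icc] at hx
      exact (hder x hx).differentiableAt.differentiableWithinAt
    · intro x hx
      rw [interior_Icc] at hx
      rw [(hder x hx).deriv]
      have hx1 : (0:ℝ) < 1 + x := by nlinarith [hx.1]
      have : 1/(1+x) ≤ 3/4 := by
        rw [div_le_iff₀ hx1]
        nlinarith [hx.1]
      linarith
  have h := hanti (Set.left_mem_Icc.2 h1) (Set.mem_Icc.2 ⟨h1, le_refl t⟩) h1
  simp only [hf] at h
  norm_num at h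
  have hlog2 : Real.log 2 ≤ 3/4 := by
    have := Real.log_two_lt_d9
    linarith
  have h2 : Real.log (1+1) = Real.log 2 := by norm_num
  nlinarith [h]

lemma log_ineq_C {t : ℝ} (h0 : 0 ≤ t) (h1 : t < 1) : Real.log (1-t) ≤ -t - t^2/4 := by
  set f : ℝ → ℝ := fun x => Real.log (1-x) + x + x^2/4 with hf
  have hder : ∀ x ∈ Set.Ioo (0:ℝ) t, HasDerivAt f (-(1/(1-x)) + 1 + x/2) x := by
    intro x hx
    have h1x : (1:ℝ) - x ≠ 0 := by nlinarith [hx.2]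
    have hbase : HasDerivAt (fun y : ℝ => 1 - y) (-1) x := by
      simpa using (hasDerivAt_id x).const_sub 1
    have hlog : HasDerivAt (fun y : ℝ => Real.log (1-y)) (-(1/(1-x))) x := by
      have := hbase.log h1x
      convert this using 1
      field_simp
    have hsq : HasDerivAt (fun y : ℝ => y^2/4) (x/2) x := by
      have := (hasDerivAt_pow 2 x).div_const 4
      exact this.congr_deriv (by push_cast; ring)
    exact (hlog.add (hasDerivAt_id x)).add hsq
  have hanti : AntitoneOn f (Set.Icc 0 t) := by
    apply antitoneOn_of_deriv_nonpos (convex_Icc 0 t)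
    · apply ContinuousOn.add
      · apply ContinuousOn.add
        · apply ContinuousOn.log (by fun_prop)
          intro x hx
          simp only [Set.mem_Icc] at hx
          nlinarith [hx.2]
        · fun_prop
      · fun_prop
    · intro x hx
      rw [interior_Icc] at hx
      exact (hder x hx).differentiableAt.differentiableWithinAt
    · intro x hx
      rw [interior_Icc] at hx
      rw [(hder x hx).deriv]
      have hx1 : (0:ℝ) < 1 - x := by nlinarith [hx.2]
      have : 1 + x/2 ≤ 1/(1-x) := by
        rw [le_div_iff₀ hx1]
        nlinarith [hx.1, hx.2]
      linarith
  have h := hanti (Set.left_mem_Icc.2 h0) (Set.mem_Icc.2 ⟨h0, le_refl t⟩) h0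
  simp only [hf] at h
  norm_num at h
  nlinarith [h]

lemma chiSq_tail_upper (k : ℕ) (hk : 1 ≤ k) {s ε : ℝ} (hs0 : 0 ≤ s) (hs : s < 1/2) :
    chiSqMeasure k {x | ε ≤ x}
      ≤ ENNReal.ofReal (Real.exp (-(s*ε)) * (1 - 2*s) ^ (-((k:ℝ)/2))) := by
  have key := chiSq_lintegral_exp k hk (l := s) hs
  have hsub : {x : ℝ | ε ≤ x} ⊆
      {x : ℝ | ENNReal.ofReal (Real.exp (s*ε)) ≤ ENNReal.ofReal (Real.exp (s * x))} := by
    intro x hx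
    exact ENNReal.ofReal_le_ofReal (Real.exp_le_exp.2 (mul_le_mul_of_nonneg_left hx hs0))
  have hmarkov : chiSqMeasure k {x | ε ≤ x} * ENNReal.ofReal (Real.exp (s*ε))
      ≤ ENNReal.ofReal ((1 - 2*s) ^ (-((k:ℝ)/2))) := by
    rw [mul_comm, ← key]
    calc ENNReal.ofReal (Real.exp (s*ε)) * chiSqMeasure k {x | ε ≤ x}
        ≤ ENNReal.ofReal (Real.exp (s*ε)) * chiSqMeasure k
            {x | ENNReal.ofReal (Real.exp (s*ε)) ≤ ENNReal.ofReal (Real.exp (s*x))} :=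
          mul_le_mul_right (measure_mono hsub) _
      _ ≤ _ := mul_meas_ge_le_lintegral₀ (by fun_prop) _
  have hexp_pos : (0:ℝ) < Real.exp (s*ε) := Real.exp_pos _
  have h := (ENNReal.le_div_iff_mul_le (Or.inl (by simp [hexp_pos] : ENNReal.ofReal (Real.exp (s*ε)) ≠ 0))
    (Or.inl ENNReal.ofReal_ne_top)).2 hmarkov
  refine h.trans (le_of_eq ?_)
  rw [← ENNReal.ofReal_div_of_pos hexp_pos]
  congr 1
  rw [div_eq_mul_inv, ← Real.exp_neg, mul_comm]

lemma chiSq_tail_lower (k : ℕ) (hk : 1 ≤ k) {s ε : ℝ} (hs0 : 0 ≤ s) :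
    chiSqMeasure k {x | x ≤ ε}
      ≤ ENNReal.ofReal (Real.exp (s*ε) * (1 + 2*s) ^ (-((k:ℝ)/2))) := by
  have key := chiSq_lintegral_exp k hk (l := -s) (by linarith)
  have hkey : ∫⁻ x, ENNReal.ofReal (Real.exp (-s * x)) ∂(chiSqMeasure k)
      = ENNReal.ofReal ((1 + 2*s) ^ (-((k:ℝ)/2))) := by
    rw [key]; norm_num
  have hsub : {x : ℝ | x ≤ ε} ⊆
      {x : ℝ | ENNReal.ofReal (Real.exp (-s*ε)) ≤ ENNReal.ofReal (Real.exp (-s * x))} := by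
    intro x hx
    apply ENNReal.ofReal_le_ofReal
    apply Real.exp_le_exp.2
    simp only [neg_mul]
    exact neg_le_neg (mul_le_mul_of_nonneg_left hx hs0)
  have hmarkov : chiSqMeasure k {x | x ≤ ε} * ENNReal.ofReal (Real.exp (-s*ε))
      ≤ ENNReal.ofReal ((1 + 2*s) ^ (-((k:ℝ)/2))) := by
    rw [mul_comm, ← hkey]
    calc ENNReal.ofReal (Real.exp (-s*ε)) * chiSqMeasure k {x | x ≤ ε}
        ≤ ENNReal.ofReal (Real.exp (-s*ε)) * chiSqMeasure k
            {x | ENNReal.ofReal (Real.exp (-s*ε)) ≤ ENNReal.ofReal (Real.exp (-s*x))} :=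
          mul_le_mul_right (measure_mono hsub) _
      _ ≤ _ := mul_meas_ge_le_lintegral₀ (by fun_prop) _
  have hexp_pos : (0:ℝ) < Real.exp (-s*ε) := Real.exp_pos _
  have h := (ENNReal.le_div_iff_mul_le (Or.inl (by simp [Real.exp_pos] : ENNReal.ofReal (Real.exp (-s*ε)) ≠ 0))
    (Or.inl ENNReal.ofReal_ne_top)).2 hmarkov
  refine h.trans (le_of_eq ?_)
  rw [← ENNReal.ofReal_div_of_pos hexp_pos]
  congr 1
  rw [div_eq_mul_inv, ← Real.exp_neg, mul_comm, neg_mul, neg_neg]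

lemma chiSq_nonpos (k : ℕ) {ε : ℝ} (hε : ε ≤ 0) : chiSqMeasure k {x | x ≤ ε} = 0 := by
  have hset : {x : ℝ | x ≤ ε} = Set.Iic ε := rfl
  rw [chiSqMeasure, hset, withDensity_apply _ measurableSet_Iic]
  rw [setLIntegral_congr_fun measurableSet_Iic
    (fun x (hx : x ≤ ε) => by
      rw [if_neg (by linarith : ¬ 0 < x)])]
  simp

lemma chiSq_upper_main (k : ℕ) (hk : 1 ≤ k) {t : ℝ} (ht : 0 < t) :
    chiSqMeasure k {x | (k:ℝ)*(1+t) ≤ x}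
      ≤ ENNReal.ofReal (Real.exp (Real.log (1+t) * ((k:ℝ)/2) - (k:ℝ)*t/2)) := by
  have h1t : (0:ℝ) < 1 + t := by linarith
  set s : ℝ := t/(2*(1+t)) with hs_def
  have hs0 : 0 ≤ s := by positivity
  have hs : s < 1/2 := by
    rw [hs_def, div_lt_iff₀ (by linarith)]; linarith
  refine (chiSq_tail_upper k hk hs0 hs (ε := (k:ℝ)*(1+t))).trans (le_of_eq ?_)
  congr 1
  have h2s : 1 - 2*s = (1+t)⁻¹ := by
    rw [hs_def]; field_simp; ring
  have hse : s * ((k:ℝ)*(1+t)) = (k:ℝ)*t/2 := by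
    rw [hs_def]; field_simp
  rw [hse, h2s, Real.inv_rpow h1t.le, Real.rpow_neg h1t.le, inv_inv,
    Real.rpow_def_of_pos h1t, ← Real.exp_add]
  congr 1
  ring

lemma chiSq_lower_main (k : ℕ) (hk : 1 ≤ k) {t : ℝ} (ht : 0 < t) (ht1 : t < 1) :
    chiSqMeasure k {x | x ≤ (k:ℝ)*(1-t)}
      ≤ ENNReal.ofReal (Real.exp (Real.log (1-t) * ((k:ℝ)/2) + (k:ℝ)*t/2)) := by
  have h1t : (0:ℝ) < 1 - t := by linarith
  set s : ℝ := t/(2*(1-t)) with hs_def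
  have hs0 : 0 ≤ s := by positivity
  refine (chiSq_tail_lower k hk hs0 (ε := (k:ℝ)*(1-t))).trans (le_of_eq ?_)
  congr 1
  have h2s : 1 + 2*s = (1-t)⁻¹ := by
    rw [hs_def]; field_simp; ring
  have hse : s * ((k:ℝ)*(1-t)) = (k:ℝ)*t/2 := by
    rw [hs_def]; field_simp
  rw [hse, h2s, Real.inv_rpow h1t.le, Real.rpow_neg h1t.le, inv_inv,
    Real.rpow_def_of_pos h1t, ← Real.exp_add]
  congr 1
  ring

/-- Concentration of a chi-squared random variable around its mean. -/
theorem chiSq_concentration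
    {Ω : Type*} [MeasureSpace Ω] [IsProbabilityMeasure (ℙ : Measure Ω)]
    (k : ℕ) (hk : 1 ≤ k) (Y : Ω → ℝ) (hY : Measurable Y)
    (hlaw : Measure.map Y ℙ = chiSqMeasure k) :
    (∀ t : ℝ, 0 < t → t < 1 →
      ℙ {ω | t ≤ |Y ω / (k : ℝ) - 1|} ≤
        ENNReal.ofReal (2 * Real.exp (-(k : ℝ) * t ^ 2 / 8))) ∧
    (∀ t : ℝ, 1 ≤ t →
      ℙ {ω | t ≤ |Y ω / (k : ℝ) - 1|} ≤
        ENNReal.ofReal (2 * Real.exp (-(k : ℝ) * t / 8))) := by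
  have hk1 : (1:ℝ) ≤ (k:ℝ) := by exact_mod_cast hk
  have hkpos : (0:ℝ) < (k:ℝ) := by linarith
  have hmain : ∀ t : ℝ, 0 < t →
      ℙ {ω | t ≤ |Y ω / (k:ℝ) - 1|} ≤
        chiSqMeasure k {x | (k:ℝ)*(1+t) ≤ x} + chiSqMeasure k {x | x ≤ (k:ℝ)*(1-t)} := by
    intro t ht
    have hmeasS : MeasurableSet {x : ℝ | t ≤ |x/(k:ℝ) - 1|} :=
      measurableSet_le measurable_const (by fun_prop)
    have hset : {ω | t ≤ |Y ω / (k:ℝ) - 1|} = Y ⁻¹' {x | t ≤ |x / (k:ℝ) - 1|} := rfl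
    rw [hset, ← Measure.map_apply hY hmeasS, hlaw]
    have hsub2 : {x : ℝ | t ≤ |x/(k:ℝ) - 1|}
        ⊆ {x | (k:ℝ)*(1+t) ≤ x} ∪ {x | x ≤ (k:ℝ)*(1-t)} := by
      intro x hx
      simp only [Set.mem_setOf_eq, Set.mem_union] at *
      rcases le_abs.1 hx with h | h
      · left
        have h2 : 1 + t ≤ x/(k:ℝ) := by linarith
        have := (le_div_iff₀ hkpos).1 h2
        linarith
      · right
        have h2 : x/(k:ℝ) ≤ 1 - t := by linarith
        have := (div_le_iff₀ hkpos).1 h2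
        linarith
    exact le_trans (measure_mono hsub2) (measure_union_le _ _)
  constructor
  · intro t ht ht1
    have hE : (0:ℝ) ≤ Real.exp (-(k:ℝ) * t^2/8) := (Real.exp_pos _).le
    have hup : chiSqMeasure k {x | (k:ℝ)*(1+t) ≤ x}
        ≤ ENNReal.ofReal (Real.exp (-(k:ℝ) * t^2/8)) := by
      refine (chiSq_upper_main k hk ht).trans (ENNReal.ofReal_le_ofReal ?_)
      apply Real.exp_le_exp.2
      have hlog := log_ineq_A ht.le ht1.le
      nlinarith [hlog, hk1]
    have hlo : chiSqMeasure k {x | x ≤ (k:ℝ)*(1-t)}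
        ≤ ENNReal.ofReal (Real.exp (-(k:ℝ) * t^2/8)) := by
      refine (chiSq_lower_main k hk ht ht1).trans (ENNReal.ofReal_le_ofReal ?_)
      apply Real.exp_le_exp.2
      have hlog := log_ineq_C ht.le ht1
      nlinarith [hlog, hk1]
    refine (hmain t ht).trans ?_
    refine (add_le_add hup hlo).trans (le_of_eq ?_)
    rw [← ENNReal.ofReal_add hE hE]
    congr 1
    ring
  · intro t ht
    have ht0 : 0 < t := by linarith
    have hup : chiSqMeasure k {x | (k:ℝ)*(1+t) ≤ x}
        ≤ ENNReal.ofReal (Real.exp (-(k:ℝ) * t/8)) := by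
      refine (chiSq_upper_main k hk ht0).trans (ENNReal.ofReal_le_ofReal ?_)
      apply Real.exp_le_exp.2
      have hlog := log_ineq_B ht
      nlinarith [hlog, hk1]
    have hlo : chiSqMeasure k {x | x ≤ (k:ℝ)*(1-t)} = 0 :=
      chiSq_nonpos k (by nlinarith : (k:ℝ)*(1-t) ≤ 0)
    refine (hmain t ht0).trans ?_
    rw [hlo, add_zero]
    refine hup.trans (ENNReal.ofReal_le_ofReal ?_)
    nlinarith [(Real.exp_pos (-(k:ℝ) * t/8)).le]
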